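/- Suppose that f is a real-valued function of the spherical angle θ ∈ [0, π] such that (sin θ)^{−1}((sin θ f)_θ)² is integrable on [0, π]. Then ∫_{0≤θ≤π} sin θ · f(θ)² dθ ≤ 2^{−1} ∫_{0≤θ≤π} (sin θ)^{−1} ((sin θ f)_θ)² dθ. -/

import Mathlib

open MeasureTheory Real

set_option maxHeartbeats 1000000
set_option linter.unnecessarySeqFocus false

lemma Gint (G : ℝ → ℝ) (hGm : Measurable G)
    (hq : IntegrableOn (fun t => (Real.sin t)⁻¹ * G t ^ 2) (Set.Icc 0 π)) :
    IntegrableOn G (Set.Icc 0 π) := by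
  rw [integrableOn_Icc_iff_integrableOn_Ioo]
  have hb0 : IntegrableOn (fun t => (Real.sin t + (Real.sin t)⁻¹ * G t ^ 2) / 2)
      (Set.Icc 0 π) := (((Real.continuous_sin.integrableOn_Icc).add hq).div_const 2)
  have hbound := hb0.mono_set Set.Ioo_subset_Icc_self
  refine hbound.mono' (hGm.aestronglyMeasurable) ?_
  rw [ae_restrict_iff' measurableSet_Ioo]
  filter_upwards with t ht
  have hs : 0 < Real.sin t := Real.sin_pos_of_pos_of_lt_pi ht.1 ht.2
  have h1 : Real.sin t * ((Real.sin t)⁻¹ * G t ^ 2) = G t ^ 2 := by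
    field_simp
  show |G t| ≤ (Real.sin t + (Real.sin t)⁻¹ * G t ^ 2) / 2
  rw [le_div_iff₀ (by norm_num : (0:ℝ) < 2)]
  rw [← mul_le_mul_iff_right₀ hs]
  nlinarith [sq_nonneg (Real.sin t - |G t|), sq_abs (G t), abs_nonneg (G t)]

lemma aux_bound (g G : ℝ → ℝ) (hGm : Measurable G)
    (hd : ∀ t ∈ Set.Ioo (0:ℝ) π, HasDerivAt g (G t) t)
    (hq : IntegrableOn (fun t => (Real.sin t)⁻¹ * G t ^ 2) (Set.Icc 0 π))
    {δ θ l : ℝ} (h1 : 0 < δ) (h2 : δ ≤ θ) (h3 : θ < π) (hl : 0 < l) :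
    |g θ - g δ| ≤ (l * (Real.cos δ - Real.cos θ)
      + (∫ t in Set.Ioo δ θ, (Real.sin t)⁻¹ * G t ^ 2) / l) / 2 := by
  have hGint := Gint G hGm hq
  have hIccsub : Set.Icc δ θ ⊆ Set.Ioo 0 π :=
    fun x hx => ⟨lt_of_lt_of_le h1 hx.1, lt_of_le_of_lt hx.2 h3⟩
  have hIccsub' : Set.Icc δ θ ⊆ Set.Icc 0 π :=
    hIccsub.trans Set.Ioo_subset_Icc_self
  have hGi : IntervalIntegrable G volume δ θ := by
    rw [intervalIntegrable_iff_integrableOn_Icc_of_le h2]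
    exact hGint.mono_set hIccsub'
  have hqi : IntervalIntegrable (fun t => (Real.sin t)⁻¹ * G t ^ 2) volume δ θ := by
    rw [intervalIntegrable_iff_integrableOn_Icc_of_le h2]
    exact hq.mono_set hIccsub'
  have hsini : IntervalIntegrable Real.sin volume δ θ :=
    Real.continuous_sin.intervalIntegrable δ θ
  have hbi : IntervalIntegrable
      (fun t => (l * Real.sin t + ((Real.sin t)⁻¹ * G t ^ 2) / l) / 2) volume δ θ :=
    (((hsini.const_mul l).add (hqi.div_const l)).div_const 2)
  have hftc : ∫ t in δ..θ, G t = g θ - g δ := by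
    apply intervalIntegral.integral_eq_sub_of_hasDerivAt
    · intro t ht
      rw [Set.uIcc_of_le h2] at ht
      exact hd t (hIccsub ht)
    · exact hGi
  rw [← hftc]
  calc |∫ t in δ..θ, G t| ≤ ∫ t in δ..θ, |G t| := by
        apply intervalIntegral.abs_integral_le_integral_abs h2
    _ ≤ ∫ t in δ..θ, (l * Real.sin t + ((Real.sin t)⁻¹ * G t ^ 2) / l) / 2 := by
        apply intervalIntegral.integral_mono_on h2 hGi.abs hbi
        intro t ht
        have hs : 0 < Real.sin t := by
          have := hIccsub ht
          exact Real.sin_pos_of_pos_of_lt_pi this.1 this.2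
        rw [le_div_iff₀ (by norm_num : (0:ℝ) < 2), ← mul_le_mul_iff_right₀ hs,
          ← mul_le_mul_iff_right₀ hl]
        have h12 : l * (Real.sin t * (((Real.sin t)⁻¹ * G t ^ 2) / l)) = G t ^ 2 := by
          field_simp
        nlinarith [sq_nonneg (l * Real.sin t - |G t|), sq_abs (G t), abs_nonneg (G t)]
    _ = (l * (Real.cos δ - Real.cos θ)
          + (∫ t in Set.Ioo δ θ, (Real.sin t)⁻¹ * G t ^ 2) / l) / 2 := by
        rw [intervalIntegral.integral_div, intervalIntegral.integral_add
          (hsini.const_mul l) (hqi.div_const l),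
          intervalIntegral.integral_const_mul, intervalIntegral.integral_div,
          integral_sin, intervalIntegral.integral_of_le h2,
          integral_Ioc_eq_integral_Ioo]

lemma exists_small_left (g : ℝ → ℝ) {η : ℝ} (hη : 0 < η) (hη2 : η ≤ π)
    (hI : IntegrableOn (fun t => (Real.sin t)⁻¹ * g t ^ 2) (Set.Ioo 0 η))
    {c : ℝ} (hc : 0 < c) : ∃ δ ∈ Set.Ioo 0 η, |g δ| < c := by
  by_contra h
  push_neg at h
  have hqnn : ∀ t ∈ Set.Ioo (0:ℝ) η, 0 ≤ (Real.sin t)⁻¹ * g t ^ 2 := by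
    intro t ht
    have hs : 0 < Real.sin t := Real.sin_pos_of_pos_of_lt_pi ht.1 (ht.2.trans_le hη2)
    positivity
  set C : ℝ := ∫ t in Set.Ioo 0 η, (Real.sin t)⁻¹ * g t ^ 2 with hCdef
  have hC0 : 0 ≤ C := setIntegral_nonneg measurableSet_Ioo hqnn
  set E : ℝ := (C + 1) / c ^ 2 with hEdef
  have hE0 : 0 < E := by positivity
  set δ : ℝ := η * Real.exp (-E) with hδdef
  have hδ0 : 0 < δ := by positivity
  have hδη : δ < η := by
    have : Real.exp (-E) < 1 := Real.exp_lt_one_iff.mpr (by linarith)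
    calc δ = η * Real.exp (-E) := rfl
    _ < η * 1 := by exact mul_lt_mul_of_pos_left this hη
    _ = η := mul_one η
  have hsub : Set.Ioo δ η ⊆ Set.Ioo 0 η := Set.Ioo_subset_Ioo hδ0.le le_rfl
  -- lower bound on the integral over (δ, η)
  have hlow : ∀ t ∈ Set.Ioo δ η, c ^ 2 * t⁻¹ ≤ (Real.sin t)⁻¹ * g t ^ 2 := by
    intro t ht
    have ht' : t ∈ Set.Ioo 0 η := hsub ht
    have hs : 0 < Real.sin t := Real.sin_pos_of_pos_of_lt_pi ht'.1 (ht'.2.trans_le hη2)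
    have hst : Real.sin t ≤ t := (Real.sin_lt ht'.1).le
    have hinv : t⁻¹ ≤ (Real.sin t)⁻¹ := by
      apply inv_anti₀ hs hst
    have hgc : c ^ 2 ≤ g t ^ 2 := by
      have := h t ht'
      nlinarith [abs_nonneg (g t), sq_abs (g t)]
    calc c ^ 2 * t⁻¹ ≤ c ^ 2 * (Real.sin t)⁻¹ := by
          exact mul_le_mul_of_nonneg_left hinv (by positivity)
      _ ≤ g t ^ 2 * (Real.sin t)⁻¹ := by
          exact mul_le_mul_of_nonneg_right hgc (by positivity)
      _ = (Real.sin t)⁻¹ * g t ^ 2 := by ring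
  have hIone : IntegrableOn (fun t => c ^ 2 * t⁻¹) (Set.Ioo δ η) := by
    apply Integrable.const_mul
    apply (ContinuousOn.integrableOn_compact isCompact_Icc ?_).mono_set Set.Ioo_subset_Icc_self
    exact ContinuousOn.inv₀ continuousOn_id (fun x hx => ne_of_gt (lt_of_lt_of_le hδ0 hx.1))
  have hmono : (∫ t in Set.Ioo δ η, c ^ 2 * t⁻¹)
      ≤ ∫ t in Set.Ioo δ η, (Real.sin t)⁻¹ * g t ^ 2 :=
    setIntegral_mono_on hIone (hI.mono_set hsub) measurableSet_Ioo hlow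
  have hval : (∫ t in Set.Ioo δ η, c ^ 2 * t⁻¹) = C + 1 := by
    rw [← integral_Ioc_eq_integral_Ioo, ← intervalIntegral.integral_of_le hδη.le,
      intervalIntegral.integral_const_mul, integral_inv_of_pos hδ0 hη]
    have h9 : η / δ = Real.exp E := by
      rw [hδdef, eq_comm, eq_div_iff (by positivity), mul_comm η, ← mul_assoc,
        ← Real.exp_add, add_neg_cancel, Real.exp_zero, one_mul]
    rw [h9, Real.log_exp, hEdef]
    field_simp
  have hup : (∫ t in Set.Ioo δ η, (Real.sin t)⁻¹ * g t ^ 2) ≤ C := by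
    apply setIntegral_mono_set hI ?_ (HasSubset.Subset.eventuallyLE hsub)
    filter_upwards [ae_restrict_mem measurableSet_Ioo] with t ht using hqnn t ht
  linarith

lemma exists_small_right (g : ℝ → ℝ) {η : ℝ} (hη : 0 ≤ η) (hη2 : η < π)
    (hI : IntegrableOn (fun t => (Real.sin t)⁻¹ * g t ^ 2) (Set.Ioo η π))
    {c : ℝ} (hc : 0 < c) : ∃ δ ∈ Set.Ioo η π, |g δ| < c := by
  by_contra h
  push_neg at h
  have hqnn : ∀ t ∈ Set.Ioo η π, 0 ≤ (Real.sin t)⁻¹ * g t ^ 2 := by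
    intro t ht
    have hs : 0 < Real.sin t := Real.sin_pos_of_pos_of_lt_pi (lt_of_le_of_lt hη ht.1) ht.2
    positivity
  set C : ℝ := ∫ t in Set.Ioo η π, (Real.sin t)⁻¹ * g t ^ 2 with hCdef
  have hC0 : 0 ≤ C := setIntegral_nonneg measurableSet_Ioo hqnn
  set E : ℝ := (C + 1) / c ^ 2 with hEdef
  have hE0 : 0 < E := by positivity
  set δ : ℝ := π - (π - η) * Real.exp (-E) with hδdef
  have hπη : 0 < π - η := by linarith
  have hexp1 : Real.exp (-E) < 1 := Real.exp_lt_one_iff.mpr (by linarith)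
  have hδ1 : η < δ := by
    have : (π - η) * Real.exp (-E) < (π - η) * 1 := mul_lt_mul_of_pos_left hexp1 hπη
    rw [hδdef]; nlinarith
  have hδ2 : δ < π := by
    have : 0 < (π - η) * Real.exp (-E) := by positivity
    rw [hδdef]; linarith
  have hsub : Set.Ioo η δ ⊆ Set.Ioo η π := Set.Ioo_subset_Ioo le_rfl hδ2.le
  have hlow : ∀ t ∈ Set.Ioo η δ, c ^ 2 * (π - t)⁻¹ ≤ (Real.sin t)⁻¹ * g t ^ 2 := by
    intro t ht
    have ht' : t ∈ Set.Ioo η π := hsub ht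
    have htπ : 0 < π - t := by linarith [ht'.2]
    have hs : 0 < Real.sin t := Real.sin_pos_of_pos_of_lt_pi (lt_of_le_of_lt hη ht'.1) ht'.2
    have hst : Real.sin t ≤ π - t := by
      rw [← Real.sin_pi_sub]
      exact (Real.sin_lt htπ).le
    have hinv : (π - t)⁻¹ ≤ (Real.sin t)⁻¹ := inv_anti₀ hs hst
    have hgc : c ^ 2 ≤ g t ^ 2 := by
      have := h t ht'
      nlinarith [abs_nonneg (g t), sq_abs (g t)]
    calc c ^ 2 * (π - t)⁻¹ ≤ c ^ 2 * (Real.sin t)⁻¹ :=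
          mul_le_mul_of_nonneg_left hinv (by positivity)
      _ ≤ g t ^ 2 * (Real.sin t)⁻¹ := mul_le_mul_of_nonneg_right hgc (by positivity)
      _ = (Real.sin t)⁻¹ * g t ^ 2 := by ring
  have hIone : IntegrableOn (fun t => c ^ 2 * (π - t)⁻¹) (Set.Ioo η δ) := by
    apply Integrable.const_mul
    apply (ContinuousOn.integrableOn_compact isCompact_Icc ?_).mono_set Set.Ioo_subset_Icc_self
    exact ContinuousOn.inv₀ (continuousOn_const.sub continuousOn_id)
      (fun x hx => ne_of_gt (by linarith [hx.2] : (0:ℝ) < π - x))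
  have hmono : (∫ t in Set.Ioo η δ, c ^ 2 * (π - t)⁻¹)
      ≤ ∫ t in Set.Ioo η δ, (Real.sin t)⁻¹ * g t ^ 2 :=
    setIntegral_mono_on hIone (hI.mono_set hsub) measurableSet_Ioo hlow
  have hval : (∫ t in Set.Ioo η δ, c ^ 2 * (π - t)⁻¹) = C + 1 := by
    rw [← integral_Ioc_eq_integral_Ioo, ← intervalIntegral.integral_of_le hδ1.le,
      intervalIntegral.integral_const_mul]
    have hcomp : (∫ t in η..δ, (π - t)⁻¹) = ∫ t in (π - δ)..(π - η), t⁻¹ :=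
      intervalIntegral.integral_comp_sub_left (fun u => u⁻¹) π
    have hπδ : 0 < π - δ := by linarith
    rw [hcomp, integral_inv_of_pos hπδ hπη]
    have h9 : (π - η) / (π - δ) = Real.exp E := by
      rw [hδdef, eq_comm]
      have : π - (π - (π - η) * Real.exp (-E)) = (π - η) * Real.exp (-E) := by ring
      rw [this, eq_div_iff (by positivity), mul_comm (π - η), ← mul_assoc,
        ← Real.exp_add, add_neg_cancel, Real.exp_zero, one_mul]
    rw [h9, Real.log_exp, hEdef]
    field_simp
  have hup : (∫ t in Set.Ioo η δ, (Real.sin t)⁻¹ * g t ^ 2) ≤ C := by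
    apply setIntegral_mono_set hI ?_ (HasSubset.Subset.eventuallyLE hsub)
    filter_upwards [ae_restrict_mem measurableSet_Ioo] with t ht using hqnn t ht
  linarith

lemma bdry_left (g G : ℝ → ℝ) (hGm : Measurable G)
    (hd : ∀ t ∈ Set.Ioo (0:ℝ) π, HasDerivAt g (G t) t)
    (hq : IntegrableOn (fun t => (Real.sin t)⁻¹ * G t ^ 2) (Set.Icc 0 π))
    (hI2 : IntegrableOn (fun t => (Real.sin t)⁻¹ * g t ^ 2) (Set.Ioo 0 π))
    {θ : ℝ} (h1 : 0 < θ) (h2 : θ ≤ π / 2) :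
    2 * Real.cos θ * g θ ^ 2 / Real.sin θ ^ 2
      ≤ 4 * ((∫ t in Set.Ioo 0 θ, (Real.sin t)⁻¹ * G t ^ 2) + Real.sin θ ^ 2) := by
  have hθπ : θ < π := lt_of_le_of_lt h2 (half_lt_self Real.pi_pos)
  set A : ℝ := ∫ t in Set.Ioo 0 θ, (Real.sin t)⁻¹ * G t ^ 2 with hAdef
  have hA0 : 0 ≤ A := by
    apply setIntegral_nonneg measurableSet_Ioo
    intro t ht
    have hs : 0 < Real.sin t := Real.sin_pos_of_pos_of_lt_pi ht.1 (ht.2.trans hθπ)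
    positivity
  have hs : 0 < Real.sin θ := Real.sin_pos_of_pos_of_lt_pi h1 hθπ
  set s : ℝ := Real.sin θ with hsdef
  clear_value A
  have hcos0 : 0 ≤ Real.cos θ := Real.cos_nonneg_of_mem_Icc ⟨by linarith, h2⟩
  have hcos1 : Real.cos θ ≤ 1 := Real.cos_le_one θ
  have hpyth : s ^ 2 + Real.cos θ ^ 2 = 1 := Real.sin_sq_add_cos_sq θ
  have h1mc : 1 - Real.cos θ ≤ s ^ 2 := by nlinarith
  -- key bound on |g θ|
  have hgb : |g θ| ≤ (Real.sqrt A + s) * s := by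
    apply le_of_forall_pos_le_add
    intro c hc
    obtain ⟨δ, hδ, hgδ⟩ := exists_small_left g h1 hθπ.le
      (hI2.mono_set (Set.Ioo_subset_Ioo le_rfl hθπ.le)) hc
    set l : ℝ := (Real.sqrt A + s) / s with hldef
    clear_value l
    have hsqA : 0 ≤ Real.sqrt A := Real.sqrt_nonneg A
    have hl : 0 < l := by rw [hldef]; exact div_pos (by linarith) hs
    have hab := aux_bound g G hGm hd hq hδ.1 hδ.2.le hθπ hl
    have hAδ : (∫ t in Set.Ioo δ θ, (Real.sin t)⁻¹ * G t ^ 2) ≤ A := by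
      rw [hAdef]
      apply setIntegral_mono_set (hq.mono_set (Set.Ioo_subset_Icc_self.trans
        (Set.Icc_subset_Icc le_rfl hθπ.le)))
      · filter_upwards [ae_restrict_mem measurableSet_Ioo] with t ht
        have hst : 0 < Real.sin t := Real.sin_pos_of_pos_of_lt_pi ht.1 (ht.2.trans hθπ)
        positivity
      · exact HasSubset.Subset.eventuallyLE (Set.Ioo_subset_Ioo hδ.1.le le_rfl)
    have hcd : Real.cos δ - Real.cos θ ≤ s ^ 2 :=
      le_trans (by linarith [Real.cos_le_one δ]) h1mc
    have hterm1 : l * (Real.cos δ - Real.cos θ) ≤ (Real.sqrt A + s) * s := by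
      calc l * (Real.cos δ - Real.cos θ) ≤ l * s ^ 2 := by
            apply mul_le_mul_of_nonneg_left hcd hl.le
        _ = (Real.sqrt A + s) * s := by rw [hldef]; field_simp
    have hterm2 : (∫ t in Set.Ioo δ θ, (Real.sin t)⁻¹ * G t ^ 2) / l
        ≤ Real.sqrt A * s := by
      have hstep : (∫ t in Set.Ioo δ θ, (Real.sin t)⁻¹ * G t ^ 2) / l ≤ A / l := by
        gcongr
      have hAl : A / l = A * s / (Real.sqrt A + s) := by
        rw [hldef]; field_simp
      have hstep2 : A * s / (Real.sqrt A + s) ≤ Real.sqrt A * s := by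
        rw [div_le_iff₀ (by linarith : (0:ℝ) < Real.sqrt A + s)]
        nlinarith [Real.sq_sqrt hA0]
      linarith [hAl ▸ hstep]
    have habs : |g θ| ≤ |g δ| + |g θ - g δ| := by
      calc |g θ| = |g δ + (g θ - g δ)| := by ring_nf
        _ ≤ |g δ| + |g θ - g δ| := abs_add_le _ _
    have hfin : (l * (Real.cos δ - Real.cos θ)
        + (∫ t in Set.Ioo δ θ, (Real.sin t)⁻¹ * G t ^ 2) / l) / 2
        ≤ (Real.sqrt A + s) * s := by
      nlinarith [Real.sqrt_nonneg A, hs, mul_pos hs hs]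
    linarith
  -- conclude
  have hg2 : g θ ^ 2 ≤ ((Real.sqrt A + s) * s) ^ 2 := by
    rw [← sq_abs]
    apply sq_le_sq' (by linarith [abs_nonneg (g θ)]) hgb
  rw [div_le_iff₀ (by nlinarith : (0:ℝ) < s ^ 2)]
  nlinarith [Real.sq_sqrt hA0, Real.sqrt_nonneg A, sq_nonneg (Real.sqrt A - s),
    sq_nonneg (g θ), mul_nonneg hA0 (sq_nonneg s)]

lemma bdry_right (g G : ℝ → ℝ) (hGm : Measurable G)
    (hd : ∀ t ∈ Set.Ioo (0:ℝ) π, HasDerivAt g (G t) t)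
    (hq : IntegrableOn (fun t => (Real.sin t)⁻¹ * G t ^ 2) (Set.Icc 0 π))
    (hI2 : IntegrableOn (fun t => (Real.sin t)⁻¹ * g t ^ 2) (Set.Ioo 0 π))
    {θ : ℝ} (h1 : π / 2 ≤ θ) (h2 : θ < π) :
    -(2 * Real.cos θ * g θ ^ 2 / Real.sin θ ^ 2)
      ≤ 4 * ((∫ t in Set.Ioo θ π, (Real.sin t)⁻¹ * G t ^ 2) + Real.sin θ ^ 2) := by
  have hθ0 : 0 < θ := lt_of_lt_of_le (half_pos Real.pi_pos) h1
  set B : ℝ := ∫ t in Set.Ioo θ π, (Real.sin t)⁻¹ * G t ^ 2 with hBdef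
  have hB0 : 0 ≤ B := by
    rw [hBdef]
    apply setIntegral_nonneg measurableSet_Ioo
    intro t ht
    have hst : 0 < Real.sin t := Real.sin_pos_of_pos_of_lt_pi (hθ0.trans ht.1) ht.2
    positivity
  have hs : 0 < Real.sin θ := Real.sin_pos_of_pos_of_lt_pi hθ0 h2
  set s : ℝ := Real.sin θ with hsdef
  clear_value B
  have hcos0 : Real.cos θ ≤ 0 :=
    Real.cos_nonpos_of_pi_div_two_le_of_le h1 (by linarith [Real.pi_pos])
  have hcosm1 : -1 ≤ Real.cos θ := Real.neg_one_le_cos θ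
  have hpyth : s ^ 2 + Real.cos θ ^ 2 = 1 := Real.sin_sq_add_cos_sq θ
  have h1pc : 1 + Real.cos θ ≤ s ^ 2 := by nlinarith
  have hgb : |g θ| ≤ (Real.sqrt B + s) * s := by
    apply le_of_forall_pos_le_add
    intro c hc
    obtain ⟨δ, hδ, hgδ⟩ := exists_small_right g hθ0.le h2
      (hI2.mono_set (Set.Ioo_subset_Ioo hθ0.le le_rfl)) hc
    set l : ℝ := (Real.sqrt B + s) / s with hldef
    clear_value l
    have hsqB : 0 ≤ Real.sqrt B := Real.sqrt_nonneg B
    have hl : 0 < l := by rw [hldef]; exact div_pos (by linarith) hs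
    have hab := aux_bound g G hGm hd hq hθ0 hδ.1.le hδ.2 hl
    have hBδ : (∫ t in Set.Ioo θ δ, (Real.sin t)⁻¹ * G t ^ 2) ≤ B := by
      rw [hBdef]
      apply setIntegral_mono_set (hq.mono_set ((Set.Ioo_subset_Icc_self).trans
        (Set.Icc_subset_Icc hθ0.le le_rfl)))
      · filter_upwards [ae_restrict_mem measurableSet_Ioo] with t ht
        have hst : 0 < Real.sin t := Real.sin_pos_of_pos_of_lt_pi (hθ0.trans ht.1) ht.2
        positivity
      · exact HasSubset.Subset.eventuallyLE (Set.Ioo_subset_Ioo le_rfl hδ.2.le)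
    have hcd : Real.cos θ - Real.cos δ ≤ s ^ 2 :=
      le_trans (by linarith [Real.neg_one_le_cos δ]) h1pc
    have hterm1 : l * (Real.cos θ - Real.cos δ) ≤ (Real.sqrt B + s) * s := by
      calc l * (Real.cos θ - Real.cos δ) ≤ l * s ^ 2 :=
            mul_le_mul_of_nonneg_left hcd hl.le
        _ = (Real.sqrt B + s) * s := by rw [hldef]; field_simp
    have hterm2 : (∫ t in Set.Ioo θ δ, (Real.sin t)⁻¹ * G t ^ 2) / l
        ≤ Real.sqrt B * s := by
      have hstep : (∫ t in Set.Ioo θ δ, (Real.sin t)⁻¹ * G t ^ 2) / l ≤ B / l := by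
        gcongr
      have hBl : B / l = B * s / (Real.sqrt B + s) := by
        rw [hldef]; field_simp
      have hstep2 : B * s / (Real.sqrt B + s) ≤ Real.sqrt B * s := by
        rw [div_le_iff₀ (by linarith : (0:ℝ) < Real.sqrt B + s)]
        nlinarith [Real.sq_sqrt hB0]
      linarith [hBl ▸ hstep]
    have habs : |g θ| ≤ |g δ| + |g δ - g θ| := by
      calc |g θ| = |g δ - (g δ - g θ)| := by ring_nf
        _ ≤ |g δ| + |g δ - g θ| := abs_sub _ _
    have hfin : (l * (Real.cos θ - Real.cos δ)
        + (∫ t in Set.Ioo θ δ, (Real.sin t)⁻¹ * G t ^ 2) / l) / 2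
        ≤ (Real.sqrt B + s) * s := by
      nlinarith [Real.sqrt_nonneg B, hs, mul_pos hs hs]
    linarith
  have hg2 : g θ ^ 2 ≤ ((Real.sqrt B + s) * s) ^ 2 := by
    rw [← sq_abs]
    apply sq_le_sq' (by linarith [abs_nonneg (g θ)]) hgb
  have hrw : -(2 * Real.cos θ * g θ ^ 2 / s ^ 2)
      = -(2 * Real.cos θ) * g θ ^ 2 / s ^ 2 := by ring
  rw [hrw, div_le_iff₀ (by nlinarith : (0:ℝ) < s ^ 2)]
  nlinarith [Real.sq_sqrt hB0, Real.sqrt_nonneg B, sq_nonneg (Real.sqrt B - s),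
    sq_nonneg (g θ), mul_nonneg hB0 (sq_nonneg s)]

lemma key_eps (g G : ℝ → ℝ) (hGm : Measurable G)
    (hd : ∀ t ∈ Set.Ioo (0:ℝ) π, HasDerivAt g (G t) t)
    (hq : IntegrableOn (fun t => (Real.sin t)⁻¹ * G t ^ 2) (Set.Icc 0 π))
    {ε : ℝ} (hε : 0 < ε) (hε2 : ε < π / 2) :
    2 * (∫ t in Set.Ioo ε (π - ε), (Real.sin t)⁻¹ * g t ^ 2)
      ≤ (∫ t in Set.Icc 0 π, (Real.sin t)⁻¹ * G t ^ 2)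
        + 2 * Real.cos ε * g ε ^ 2 / Real.sin ε ^ 2
        - 2 * Real.cos (π - ε) * g (π - ε) ^ 2 / Real.sin (π - ε) ^ 2 := by
  have hπ := Real.pi_pos
  have hεπ : ε < π - ε := by linarith
  have hK : Set.Icc ε (π - ε) ⊆ Set.Ioo 0 π :=
    fun t ht => ⟨lt_of_lt_of_le hε ht.1, lt_of_le_of_lt ht.2 (by linarith)⟩
  have hKIcc : Set.Icc ε (π - ε) ⊆ Set.Icc 0 π := hK.trans Set.Ioo_subset_Icc_self
  have hsK : ∀ t ∈ Set.Icc ε (π - ε), 0 < Real.sin t := by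
    intro t ht
    have := hK ht
    exact Real.sin_pos_of_pos_of_lt_pi this.1 this.2
  have hgK : ContinuousOn g (Set.Icc ε (π - ε)) :=
    fun t ht => ((hd t (hK ht)).continuousAt).continuousWithinAt
  -- derivative of the boundary-function P
  set P' : ℝ → ℝ := fun t =>
    ((-2 * Real.sin t) * Real.sin t ^ 2
      - (2 * Real.cos t) * (2 * Real.sin t * Real.cos t)) / (Real.sin t ^ 2) ^ 2 * g t ^ 2
    + (2 * Real.cos t / Real.sin t ^ 2) * (2 * g t * G t) with hP'def
  have hP : ∀ t ∈ Set.Ioo (0:ℝ) π, HasDerivAt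
      (fun u => 2 * Real.cos u * g u ^ 2 / Real.sin u ^ 2) (P' t) t := by
    intro t ht
    have hst : Real.sin t ≠ 0 := ne_of_gt (Real.sin_pos_of_pos_of_lt_pi ht.1 ht.2)
    have h1 : HasDerivAt (fun u => 2 * Real.cos u) (-2 * Real.sin t) t := by
      have := (Real.hasDerivAt_cos t).const_mul 2
      exact this.congr_deriv (by ring)
    have h2 : HasDerivAt (fun u => Real.sin u ^ 2) (2 * Real.sin t * Real.cos t) t := by
      have := (Real.hasDerivAt_sin t).pow 2
      exact this.congr_deriv (by ring)
    have hphi : HasDerivAt (fun u => 2 * Real.cos u / Real.sin u ^ 2)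
        (((-2 * Real.sin t) * Real.sin t ^ 2
          - (2 * Real.cos t) * (2 * Real.sin t * Real.cos t)) / (Real.sin t ^ 2) ^ 2) t :=
      h1.div h2 (pow_ne_zero 2 hst)
    have hg2 : HasDerivAt (fun u => g u ^ 2) (2 * g t * G t) t := by
      have := (hd t ht).pow 2
      exact this.congr_deriv (by ring)
    have heq1 : (fun u => 2 * Real.cos u * g u ^ 2 / Real.sin u ^ 2)
        = fun u => (2 * Real.cos u / Real.sin u ^ 2) * g u ^ 2 := by
      funext u; ring
    rw [heq1, hP'def]
    exact hphi.mul hg2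
  -- integrability pieces on [ε, π-ε]
  have hq_i : IntervalIntegrable (fun t => (Real.sin t)⁻¹ * G t ^ 2) volume ε (π - ε) := by
    rw [intervalIntegrable_iff_integrableOn_Icc_of_le hεπ.le]
    exact hq.mono_set hKIcc
  have hr_i : IntervalIntegrable (fun t => (Real.sin t)⁻¹ * g t ^ 2) volume ε (π - ε) := by
    apply ContinuousOn.intervalIntegrable
    rw [Set.uIcc_of_le hεπ.le]
    exact (Real.continuous_sin.continuousOn.inv₀
      (fun t ht => ne_of_gt (hsK t ht))).mul (hgK.pow 2)
  have hGi : IntegrableOn G (Set.Icc ε (π - ε)) :=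
    (Gint G hGm hq).mono_set hKIcc
  have ht1_i : IntervalIntegrable (fun t =>
      ((-2 * Real.sin t) * Real.sin t ^ 2
        - (2 * Real.cos t) * (2 * Real.sin t * Real.cos t)) / (Real.sin t ^ 2) ^ 2
        * g t ^ 2) volume ε (π - ε) := by
    apply ContinuousOn.intervalIntegrable
    rw [Set.uIcc_of_le hεπ.le]
    apply ContinuousOn.mul ?_ (hgK.pow 2)
    apply ContinuousOn.div
    · fun_prop
    · fun_prop
    · exact fun t ht => pow_ne_zero 2 (pow_ne_zero 2 (ne_of_gt (hsK t ht)))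
  have ht2_i : IntervalIntegrable (fun t =>
      (2 * Real.cos t / Real.sin t ^ 2) * (2 * g t * G t)) volume ε (π - ε) := by
    rw [intervalIntegrable_iff_integrableOn_Icc_of_le hεπ.le]
    have hcont : ContinuousOn (fun t => (2 * Real.cos t / Real.sin t ^ 2) * (2 * g t))
        (Set.Icc ε (π - ε)) := by
      apply ContinuousOn.mul ?_ (continuousOn_const.mul hgK)
      apply ContinuousOn.div
      · fun_prop
      · fun_prop
      · exact fun t ht => pow_ne_zero 2 (ne_of_gt (hsK t ht))
    obtain ⟨M, hM⟩ := isCompact_Icc.exists_bound_of_continuousOn hcont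
    have hmeas : AEStronglyMeasurable (fun t =>
        (2 * Real.cos t / Real.sin t ^ 2) * (2 * g t * G t))
        (volume.restrict (Set.Icc ε (π - ε))) := by
      have h1 : AEStronglyMeasurable (fun t => (2 * Real.cos t / Real.sin t ^ 2) * (2 * g t))
          (volume.restrict (Set.Icc ε (π - ε))) :=
        hcont.aestronglyMeasurable measurableSet_Icc
      apply (h1.mul hGm.aestronglyMeasurable.restrict).congr
      filter_upwards with t
      simp only [Pi.mul_apply]
      ring
    apply Integrable.mono' (hGi.abs.const_mul M) hmeas
    filter_upwards [ae_restrict_mem measurableSet_Icc] with t ht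
    have := hM t ht
    rw [Real.norm_eq_abs] at this ⊢
    calc |2 * Real.cos t / Real.sin t ^ 2 * (2 * g t * G t)|
        = |2 * Real.cos t / Real.sin t ^ 2 * (2 * g t)| * |G t| := by
          rw [← abs_mul]; ring_nf
      _ ≤ M * |G t| := mul_le_mul_of_nonneg_right this (abs_nonneg _)
  have hP'_i : IntervalIntegrable P' volume ε (π - ε) := by
    rw [hP'def]; exact ht1_i.add ht2_i
  -- pointwise inequality
  have hpt : ∀ t ∈ Set.Icc ε (π - ε),
      2 * ((Real.sin t)⁻¹ * g t ^ 2) + P' t ≤ (Real.sin t)⁻¹ * G t ^ 2 := by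
    intro t ht
    have hs := hsK t ht
    have hid : (Real.sin t)⁻¹ * G t ^ 2 - (2 * ((Real.sin t)⁻¹ * g t ^ 2) + P' t)
        = (Real.sin t * G t - 2 * Real.cos t * g t) ^ 2 / Real.sin t ^ 3 := by
      rw [hP'def]
      field_simp
      ring
    nlinarith [div_nonneg (sq_nonneg (Real.sin t * G t - 2 * Real.cos t * g t))
      (le_of_lt (pow_pos hs 3)), hid]
  -- integrate
  have hmono : (∫ t in ε..(π - ε), (2 * ((Real.sin t)⁻¹ * g t ^ 2) + P' t))
      ≤ ∫ t in ε..(π - ε), (Real.sin t)⁻¹ * G t ^ 2 := by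
    apply intervalIntegral.integral_mono_on hεπ.le ((hr_i.const_mul 2).add hP'_i) hq_i hpt
  have hsplit : (∫ t in ε..(π - ε), (2 * ((Real.sin t)⁻¹ * g t ^ 2) + P' t))
      = 2 * (∫ t in ε..(π - ε), (Real.sin t)⁻¹ * g t ^ 2) + ∫ t in ε..(π - ε), P' t := by
    rw [intervalIntegral.integral_add (hr_i.const_mul 2) hP'_i,
      intervalIntegral.integral_const_mul]
  have hftc : (∫ t in ε..(π - ε), P' t)
      = 2 * Real.cos (π - ε) * g (π - ε) ^ 2 / Real.sin (π - ε) ^ 2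
        - 2 * Real.cos ε * g ε ^ 2 / Real.sin ε ^ 2 := by
    apply intervalIntegral.integral_eq_sub_of_hasDerivAt
      (f := fun u => 2 * Real.cos u * g u ^ 2 / Real.sin u ^ 2) ?_ hP'_i
    intro t ht
    rw [Set.uIcc_of_le hεπ.le] at ht
    exact hP t (hK ht)
  have hIoo : (∫ t in ε..(π - ε), (Real.sin t)⁻¹ * g t ^ 2)
      = ∫ t in Set.Ioo ε (π - ε), (Real.sin t)⁻¹ * g t ^ 2 := by
    rw [intervalIntegral.integral_of_le hεπ.le, integral_Ioc_eq_integral_Ioo]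
  have hqle : (∫ t in ε..(π - ε), (Real.sin t)⁻¹ * G t ^ 2)
      ≤ ∫ t in Set.Icc 0 π, (Real.sin t)⁻¹ * G t ^ 2 := by
    rw [intervalIntegral.integral_of_le hεπ.le]
    apply setIntegral_mono_set hq
    · filter_upwards [ae_restrict_mem measurableSet_Icc] with t ht
      have h0 : 0 ≤ Real.sin t := Real.sin_nonneg_of_nonneg_of_le_pi ht.1 ht.2
      positivity
    · exact HasSubset.Subset.eventuallyLE
        ((Set.Ioc_subset_Icc_self).trans (Set.Icc_subset_Icc hε.le (by linarith)))
  rw [hIoo, hftc] at hsplit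
  linarith [hsplit ▸ hmono]

/-- third inequality of (21): for a differentiable function f of the
spherical angle θ ∈ [0,π] with (sin θ)⁻¹((sin θ f)_θ)² integrable,
∫ sin θ f² dθ ≤ 2⁻¹ ∫ (sin θ)⁻¹ ((sin θ f)_θ)² dθ. -/
theorem statement17 (f : ℝ → ℝ)
    (hf : DifferentiableOn ℝ f (Set.Ioo 0 π))
    (hint : IntegrableOn
      (fun θ => (Real.sin θ)⁻¹ * (deriv (fun t => Real.sin t * f t) θ) ^ 2)
      (Set.Icc 0 π)) :
    (∫ θ in Set.Icc (0 : ℝ) π, Real.sin θ * f θ ^ 2) ≤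
      2⁻¹ * ∫ θ in Set.Icc (0 : ℝ) π,
        (Real.sin θ)⁻¹ * (deriv (fun t => Real.sin t * f t) θ) ^ 2 := by
  have hπ := Real.pi_pos
  set g : ℝ → ℝ := fun t => Real.sin t * f t with hgdef
  set G : ℝ → ℝ := deriv g with hGdef
  have hGm : Measurable G := measurable_deriv g
  have hd : ∀ t ∈ Set.Ioo (0:ℝ) π, HasDerivAt g (G t) t := by
    intro t ht
    have hfd : DifferentiableAt ℝ f t := (hf t ht).differentiableAt (isOpen_Ioo.mem_nhds ht)
    exact ((Real.differentiable_sin.differentiableAt).mul hfd).hasDerivAt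
  set I : ℝ := ∫ θ in Set.Icc (0:ℝ) π, (Real.sin θ)⁻¹ * G θ ^ 2 with hIdef
  have hI0 : 0 ≤ I := by
    rw [hIdef]
    apply setIntegral_nonneg measurableSet_Icc
    intro t ht
    have h0 : 0 ≤ Real.sin t := Real.sin_nonneg_of_nonneg_of_le_pi ht.1 ht.2
    positivity
  by_cases hB : IntegrableOn (fun θ => Real.sin θ * f θ ^ 2) (Set.Icc 0 π)
  · -- main case
    have hEq : Set.EqOn (fun θ => Real.sin θ * f θ ^ 2)
        (fun θ => (Real.sin θ)⁻¹ * g θ ^ 2) (Set.Ioo 0 π) := by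
      intro t ht
      have hs : Real.sin t ≠ 0 := ne_of_gt (Real.sin_pos_of_pos_of_lt_pi ht.1 ht.2)
      show Real.sin t * f t ^ 2 = (Real.sin t)⁻¹ * (Real.sin t * f t) ^ 2
      field_simp
    have hI2 : IntegrableOn (fun t => (Real.sin t)⁻¹ * g t ^ 2) (Set.Ioo 0 π) :=
      ((hB.mono_set Set.Ioo_subset_Icc_self).congr_fun hEq measurableSet_Ioo)
    have hLHS : (∫ θ in Set.Icc (0:ℝ) π, Real.sin θ * f θ ^ 2)
        = ∫ t in Set.Ioo (0:ℝ) π, (Real.sin t)⁻¹ * g t ^ 2 := by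
      rw [integral_Icc_eq_integral_Ioo]
      exact setIntegral_congr_fun measurableSet_Ioo hEq
    rw [hLHS]
    set T : ℝ := ∫ t in Set.Ioo (0:ℝ) π, (Real.sin t)⁻¹ * g t ^ 2 with hTdef
    -- sequence of cutoffs
    set a : ℕ → ℝ := fun n => π / (2 * (n + 2)) with hadef
    have ha_pos : ∀ n, 0 < a n := fun n => by
      rw [hadef]; positivity
    have ha_lt : ∀ n, a n < π / 2 := by
      intro n
      rw [hadef, div_lt_div_iff₀ (by positivity) (by norm_num)]
      nlinarith [hπ, (Nat.cast_nonneg n : (0:ℝ) ≤ n)]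
    have ha_anti : Antitone a := by
      intro m n hmn
      rw [hadef]
      apply div_le_div_of_nonneg_left hπ.le (by positivity)
      have : (m:ℝ) ≤ n := Nat.cast_le.mpr hmn
      linarith
    have ha_tend : Filter.Tendsto a Filter.atTop (nhds 0) := by
      rw [hadef]
      apply Filter.Tendsto.div_atTop tendsto_const_nhds
      apply Filter.Tendsto.const_mul_atTop (by norm_num : (0:ℝ) < 2)
      exact Filter.tendsto_atTop_add_const_right _ 2 tendsto_natCast_atTop_atTop
    have hsin_tend : Filter.Tendsto (fun n => Real.sin (a n) ^ 2) Filter.atTop (nhds 0) := by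
      have h1 : Filter.Tendsto (fun n => Real.sin (a n)) Filter.atTop (nhds 0) := by
        have := (Real.continuous_sin.tendsto 0).comp ha_tend
        simpa [Function.comp_def] using this
      simpa using h1.pow 2
    -- monotone family of sets
    set S : ℕ → Set ℝ := fun n => Set.Ioo (a n) (π - a n) with hSdef
    have hS_meas : ∀ n, MeasurableSet (S n) := fun n => measurableSet_Ioo
    have hS_mono : Monotone S := by
      intro m n hmn
      rw [hSdef]
      exact Set.Ioo_subset_Ioo (ha_anti hmn) (by linarith [ha_anti hmn])
    have hS_union : (⋃ n, S n) = Set.Ioo 0 π := by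
      ext x
      simp only [Set.mem_iUnion, hSdef, Set.mem_Ioo]
      constructor
      · rintro ⟨n, h1, h2⟩
        exact ⟨(ha_pos n).trans h1, by linarith [ha_pos n]⟩
      · rintro ⟨h1, h2⟩
        set m : ℝ := min x (π - x) with hmdef
        have hm : 0 < m := lt_min h1 (by linarith)
        obtain ⟨n, hn⟩ := exists_nat_gt (π / m)
        refine ⟨n, ?_, ?_⟩
        · have : a n < m := by
            rw [hadef, div_lt_iff₀ (by positivity)]
            rw [div_lt_iff₀ hm] at hn
            nlinarith [hm, (Nat.cast_nonneg n : (0:ℝ) ≤ n)]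
          exact this.trans_le (min_le_left _ _)
        · have : a n < π - x := by
            have h3 : a n < m := by
              rw [hadef, div_lt_iff₀ (by positivity)]
              rw [div_lt_iff₀ hm] at hn
              nlinarith [hm, (Nat.cast_nonneg n : (0:ℝ) ≤ n)]
            exact h3.trans_le (min_le_right _ _)
          linarith
    have htendT : Filter.Tendsto (fun n => ∫ t in S n, (Real.sin t)⁻¹ * g t ^ 2)
        Filter.atTop (nhds T) := by
      rw [hTdef, ← hS_union]
      exact tendsto_setIntegral_of_monotone hS_meas hS_mono (hS_union ▸ hI2)
    -- A and B boundary integrals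
    set A : ℕ → ℝ := fun n => ∫ t in Set.Ioo 0 (a n), (Real.sin t)⁻¹ * G t ^ 2 with hAdef
    set B : ℕ → ℝ := fun n => ∫ t in Set.Ioo (π - a n) π, (Real.sin t)⁻¹ * G t ^ 2 with hBdef
    have hA_tend : Filter.Tendsto A Filter.atTop (nhds 0) := by
      have h1 : (⋂ n, Set.Ioo (0:ℝ) (a n)) = ∅ := by
        ext x
        simp only [Set.mem_iInter, Set.mem_Ioo, Set.mem_empty_iff_false, iff_false, not_forall]
        by_contra hcon
        push_neg at hcon
        have hx0 : 0 < x := (hcon 0).1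
        obtain ⟨n, hn⟩ := exists_nat_gt (π / x)
        have : a n < x := by
          rw [hadef, div_lt_iff₀ (by positivity)]
          rw [div_lt_iff₀ hx0] at hn
          nlinarith [hx0, (Nat.cast_nonneg n : (0:ℝ) ≤ n)]
        exact absurd (hcon n).2 (not_lt.mpr this.le)
      have := tendsto_setIntegral_of_antitone (f := fun t => (Real.sin t)⁻¹ * G t ^ 2)
        (μ := volume) (s := fun n => Set.Ioo 0 (a n)) (fun n => measurableSet_Ioo)
        (fun m n hmn => Set.Ioo_subset_Ioo le_rfl (ha_anti hmn))
        ⟨0, hint.mono_set (Set.Ioo_subset_Icc_self.trans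
          (Set.Icc_subset_Icc le_rfl (by linarith [ha_lt 0])))⟩
      rw [h1] at this
      simpa [hAdef] using this
    have hB_tend : Filter.Tendsto B Filter.atTop (nhds 0) := by
      have h1 : (⋂ n, Set.Ioo (π - a n) π) = ∅ := by
        ext x
        simp only [Set.mem_iInter, Set.mem_Ioo, Set.mem_empty_iff_false, iff_false, not_forall]
        by_contra hcon
        push_neg at hcon
        have hxπ : x < π := (hcon 0).2
        have hd0 : 0 < π - x := by linarith
        obtain ⟨n, hn⟩ := exists_nat_gt (π / (π - x))
        have : a n < π - x := by
          rw [hadef, div_lt_iff₀ (by positivity)]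
          rw [div_lt_iff₀ hd0] at hn
          nlinarith [hd0, (Nat.cast_nonneg n : (0:ℝ) ≤ n)]
        exact absurd (hcon n).1 (not_lt.mpr (by linarith))
      have := tendsto_setIntegral_of_antitone (f := fun t => (Real.sin t)⁻¹ * G t ^ 2)
        (μ := volume) (s := fun n => Set.Ioo (π - a n) π) (fun n => measurableSet_Ioo)
        (fun m n hmn => Set.Ioo_subset_Ioo (by linarith [ha_anti hmn]) le_rfl)
        ⟨0, hint.mono_set (Set.Ioo_subset_Icc_self.trans
          (Set.Icc_subset_Icc (by linarith [ha_pos 0, ha_lt 0]) le_rfl))⟩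
      rw [h1] at this
      simpa [hBdef] using this
    -- per-n bound
    have hbound : ∀ n, 2 * (∫ t in S n, (Real.sin t)⁻¹ * g t ^ 2)
        ≤ I + (4 * (A n + Real.sin (a n) ^ 2) + 4 * (B n + Real.sin (a n) ^ 2)) := by
      intro n
      have hkey := key_eps g G hGm hd hint (ha_pos n) (ha_lt n)
      have hbl := bdry_left g G hGm hd hint hI2 (ha_pos n) (ha_lt n).le
      have hbr := bdry_right g G hGm hd hint hI2
        (θ := π - a n) (by linarith [ha_lt n]) (by linarith [ha_pos n])
      have hsin_eq : Real.sin (π - a n) ^ 2 = Real.sin (a n) ^ 2 := by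
        rw [Real.sin_pi_sub]
      rw [hsin_eq] at hkey hbr
      have hAn : A n = ∫ t in Set.Ioo 0 (a n), (Real.sin t)⁻¹ * G t ^ 2 := by
        simp only [hAdef]
      have hBn : B n = ∫ t in Set.Ioo (π - a n) π, (Real.sin t)⁻¹ * G t ^ 2 := by
        simp only [hBdef]
      have hSn : S n = Set.Ioo (a n) (π - a n) := by simp only [hSdef]
      rw [hSn, hAn, hBn, hIdef]
      linarith
    -- take limits
    have htendR : Filter.Tendsto
        (fun n => I + (4 * (A n + Real.sin (a n) ^ 2) + 4 * (B n + Real.sin (a n) ^ 2)))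
        Filter.atTop (nhds (I + (4 * (0 + 0) + 4 * (0 + 0)))) := by
      exact Filter.Tendsto.add tendsto_const_nhds
        (((hA_tend.add hsin_tend).const_mul 4).add ((hB_tend.add hsin_tend).const_mul 4))
    have h2T : 2 * T ≤ I + (4 * (0 + 0) + 4 * (0 + 0)) :=
      le_of_tendsto_of_tendsto' (htendT.const_mul 2) htendR hbound
    simp only [add_zero, mul_zero] at h2T
    linarith
  · rw [integral_undef hB]
    linarith
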